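/- Let X be a locally compact metric space and F : X → 𝒫(X) an upper semicontinuous multivalued map with compact values. Let N ⊆ X be an isolating neighbourhood for F (i.e., N is compact and Inv N ⊆ int N). Then for every neighbourhood W of Inv N there exists a weak index pair P = (P₁,P₂) in N such that P₁ \ P₂ ⊆ W. -/

import Mathlib

open Set Topology

/-- The image of a set under a multivalued map. -/
def MVImage {Y : Type*} (F : Y → Set Y) (A : Set Y) : Set Y :=
  ⋃ y ∈ A, F y

/-- Upper semicontinuity of a multivalued map: the large counter image of every
closed set is closed. -/
def IsUSC {Y : Type*} [TopologicalSpace Y] (F : Y → Set Y) : Prop :=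
  ∀ B : Set Y, IsClosed B → IsClosed {y | (F y ∩ B).Nonempty}

/-- The invariant part of `N` with respect to `F`: points admitting a full
solution (in `N`) through them. -/
def InvPart {Y : Type*} (F : Y → Set Y) (N : Set Y) : Set Y :=
  {y | ∃ σ : ℤ → Y, (∀ n : ℤ, σ n ∈ N) ∧ σ 0 = y ∧ ∀ n : ℤ, σ (n + 1) ∈ F (σ n)}

/-- The `F`-boundary of a set `A`: `cl A ∩ cl (F(A) \ A)`. -/
def FBoundary {Y : Type*} [TopologicalSpace Y] (F : Y → Set Y) (A : Set Y) : Set Y :=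
  closure A ∩ closure (MVImage F A \ A)

/-- `(P₁, P₂)` is a weak index pair for `F` in `N`. -/
structure IsWeakIndexPair {Y : Type*} [TopologicalSpace Y] (F : Y → Set Y)
    (N P₁ P₂ : Set Y) : Prop where
  compact₁ : IsCompact P₁
  compact₂ : IsCompact P₂
  subset₂₁ : P₂ ⊆ P₁
  subset₁N : P₁ ⊆ N
  mapsInto₁ : MVImage F P₁ ∩ N ⊆ P₁
  mapsInto₂ : MVImage F P₂ ∩ N ⊆ P₂
  fBoundary_subset : FBoundary F P₁ ⊆ P₂
  inv_subset : InvPart F N ⊆ interior (P₁ \ P₂)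
  diff_subset : P₁ \ P₂ ⊆ interior N

open Filter

set_option maxHeartbeats 1000000

section Aux

variable {X : Type*} [MetricSpace X]

/-- One-step map of `F` within `N`. -/
def GG (F : X → Set X) (N : Set X) (B : Set X) : Set X := MVImage F B ∩ N

/-- Forward-asymptotic part. -/
def InvPlus (F : X → Set X) (N : Set X) : Set X :=
  {x | ∃ σ : ℕ → X, σ 0 = x ∧ (∀ i, σ i ∈ N) ∧ ∀ i, σ (i + 1) ∈ F (σ i)}

lemma mem_MVImage {F : X → Set X} {B : Set X} {y : X} :
    y ∈ MVImage F B ↔ ∃ x ∈ B, y ∈ F x := by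
  simp [MVImage]

lemma graph_closed (F : X → Set X) (hF : IsUSC F) (hFc : ∀ x, IsCompact (F x)) :
    IsClosed {p : X × X | p.2 ∈ F p.1} := by
  rw [← isOpen_compl_iff, isOpen_iff_mem_nhds]
  rintro ⟨x, y⟩ hxy
  simp only [mem_compl_iff, mem_setOf_eq] at hxy
  have hcl : IsClosed (F x) := (hFc x).isClosed
  obtain ⟨ε, hε, hball⟩ : ∃ ε > 0, Metric.ball y ε ⊆ (F x)ᶜ :=
    Metric.isOpen_iff.mp hcl.isOpen_compl y hxy
  set B := Metric.closedBall y (ε / 2) with hB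
  have hBF : F x ∩ B = ∅ := by
    ext z; simp only [mem_inter_iff, mem_empty_iff_false, iff_false, not_and]
    intro hz hzB
    have hzB' : dist z y ≤ ε / 2 := Metric.mem_closedBall.mp hzB
    exact hball (Metric.mem_ball.mpr (lt_of_le_of_lt hzB' (by linarith))) hz
  have hU : IsOpen {z | (F z ∩ B).Nonempty}ᶜ := (hF B Metric.isClosed_closedBall).isOpen_compl
  have hxU : x ∈ {z | (F z ∩ B).Nonempty}ᶜ := by
    simp only [mem_compl_iff, mem_setOf_eq, hBF]
    simp [Set.not_nonempty_empty]
  have : ({z | (F z ∩ B).Nonempty}ᶜ ×ˢ Metric.ball y (ε / 2)) ∈ 𝓝 (x, y) :=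
    prod_mem_nhds (hU.mem_nhds hxU) (Metric.ball_mem_nhds y (by linarith))
  refine Filter.mem_of_superset this ?_
  rintro ⟨z, w⟩ ⟨hz, hw⟩
  simp only [mem_compl_iff, mem_setOf_eq] at hz ⊢
  intro hwF
  exact hz ⟨w, hwF, Metric.ball_subset_closedBall hw⟩

lemma step_limit {F : X → Set X} (hF : IsUSC F) (hFc : ∀ x, IsCompact (F x))
    {a b : X} {u : ℕ → X} {v : ℕ → X}
    (ha : Tendsto u atTop (𝓝 a)) (hb : Tendsto v atTop (𝓝 b))
    (hmem : ∀ᶠ k in atTop, v k ∈ F (u k)) : b ∈ F a := by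
  have := (graph_closed F hF hFc).mem_of_tendsto (ha.prodMk_nhds hb)
    (hmem.mono fun k hk => hk)
  exact this

lemma mvimage_compact {F : X → Set X} (hF : IsUSC F) (hFc : ∀ x, IsCompact (F x))
    {B : Set X} (hB : IsCompact B) : IsCompact (MVImage F B) := by
  refine isCompact_of_finite_subcover fun {ι} U hUo hcov => ?_
  classical
  have hcov' : ∀ x : X, x ∈ B → ∃ t : Finset ι, F x ⊆ ⋃ i ∈ t, U i := by
    intro x hx
    refine (hFc x).elim_finite_subcover U hUo ?_
    exact fun y hy => hcov (mem_MVImage.mpr ⟨x, hx, hy⟩)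
  choose! t ht using hcov'
  set O : X → Set X := fun x => {z | (F z ∩ (⋃ i ∈ t x, U i)ᶜ).Nonempty}ᶜ with hO
  have hOopen : ∀ x, IsOpen (O x) := by
    intro x
    exact (hF _ (isClosed_compl_iff.mpr (isOpen_biUnion fun i _ => hUo i))).isOpen_compl
  have hcovB : B ⊆ ⋃ x ∈ B, O x := by
    intro x hx
    refine mem_biUnion hx ?_
    simp only [O, mem_compl_iff, mem_setOf_eq]
    rintro ⟨z, hz1, hz2⟩
    exact hz2 (ht x hx hz1)
  obtain ⟨s, hs⟩ := hB.elim_finite_subcover (fun b : B => O b) (fun b => hOopen b)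
    (by intro x hx; obtain ⟨y, hy, hxy⟩ := mem_iUnion₂.mp (hcovB hx)
        exact mem_iUnion.mpr ⟨⟨y, hy⟩, hxy⟩)
  refine ⟨s.biUnion fun b => t b, ?_⟩
  intro y hy
  obtain ⟨x, hx, hyF⟩ := mem_MVImage.mp hy
  obtain ⟨b, hbs, hxO⟩ := by
    have := hs hx
    simpa only [mem_iUnion, exists_prop] using this
  simp only [O, mem_compl_iff, mem_setOf_eq, not_nonempty_iff_eq_empty] at hxO
  have hyU : y ∈ ⋃ i ∈ t b, U i := by
    by_contra hc
    exact (eq_empty_iff_forall_notMem.mp hxO y) ⟨hyF, hc⟩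
  obtain ⟨i, hit, hyi⟩ := mem_iUnion₂.mp hyU
  exact mem_iUnion₂.mpr ⟨i, Finset.mem_biUnion.mpr ⟨b, hbs, hit⟩, hyi⟩

lemma seq_extract {N : Set X} (hN : IsCompact N) (g : ℕ → ℤ → X) (hg : ∀ k j, g k j ∈ N) :
    ∃ f : ℤ → X, (∀ j, f j ∈ N) ∧ ∃ φ : ℕ → ℕ, StrictMono φ ∧
      ∀ j, Tendsto (fun k => g (φ k) j) atTop (𝓝 (f j)) := by
  have hK : IsCompact (Set.univ.pi fun _ : ℤ => N) := isCompact_univ_pi fun _ => hN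
  have hseq : IsSeqCompact (Set.univ.pi fun _ : ℤ => N) := hK.isSeqCompact
  obtain ⟨f, hf, φ, hφ, hconv⟩ := hseq (x := g) (fun k => by
    intro j _; exact hg k j)
  refine ⟨f, fun j => hf j (mem_univ j), φ, hφ, fun j => ?_⟩
  exact tendsto_pi_nhds.mp hconv j

end Aux

section Aux2

variable {X : Type*} [MetricSpace X] {F : X → Set X} {N : Set X}

lemma mem_GG {B : Set X} {y : X} :
    y ∈ GG F N B ↔ (∃ x ∈ B, y ∈ F x) ∧ y ∈ N := by
  simp [GG, mem_MVImage, mem_inter_iff]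

lemma mem_iterate_GG {B : Set X} (n : ℕ) (x : X) :
    x ∈ (GG F N)^[n] B ↔ ∃ c : ℕ → X, c 0 ∈ B ∧ c n = x ∧
      (∀ i, 1 ≤ i → i ≤ n → c i ∈ N) ∧ ∀ i < n, c (i + 1) ∈ F (c i) := by
  induction n generalizing x with
  | zero =>
    simp only [Function.iterate_zero, id_eq]
    constructor
    · intro hx; exact ⟨fun _ => x, hx, rfl, by omega, by omega⟩
    · rintro ⟨c, hc0, hcn, -, -⟩; rwa [← hcn]
  | succ n ih =>
    rw [Function.iterate_succ_apply']
    constructor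
    · intro hx
      obtain ⟨⟨y, hy, hxF⟩, hxN⟩ := mem_GG.mp hx
      obtain ⟨c, hc0, hcn, hcN, hcS⟩ := ih y |>.mp hy
      refine ⟨fun i => if i ≤ n then c i else x, by simpa using hc0, by simp, ?_, ?_⟩
      · intro i h1 h2
        by_cases h : i ≤ n
        · simp only [if_pos h]; exact hcN i h1 h
        · simp only [if_neg h]; exact hxN
      · intro i hi
        by_cases h : i + 1 ≤ n
        · simp only [if_pos h, if_pos (by omega : i ≤ n)]
          exact hcS i (by omega)
        · have : i = n := by omega
          subst this
          simp only [if_neg h, if_pos le_rfl, hcn]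
          exact hxF
    · rintro ⟨c, hc0, hcn, hcN, hcS⟩
      refine mem_GG.mpr ⟨⟨c n, ?_, ?_⟩, ?_⟩
      · exact ih (c n) |>.mpr ⟨c, hc0, rfl, fun i h1 h2 => hcN i h1 (by omega),
          fun i hi => hcS i (by omega)⟩
      · rw [← hcn]; exact hcS n (by omega)
      · rw [← hcn]; exact hcN (n + 1) (by omega) le_rfl

lemma iterate_GG_compact (hF : IsUSC F) (hFc : ∀ x, IsCompact (F x)) (hN : IsCompact N)
    {B : Set X} (hB : IsCompact B) (n : ℕ) : IsCompact ((GG F N)^[n] B) := by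
  induction n with
  | zero => simpa using hB
  | succ n ih =>
    rw [Function.iterate_succ_apply']
    exact (mvimage_compact hF hFc ih).inter_right hN.isClosed

lemma iterate_GG_subset_N {B : Set X} (hBN : B ⊆ N) (n : ℕ) : (GG F N)^[n] B ⊆ N := by
  cases n with
  | zero => simpa using hBN
  | succ n =>
    rw [Function.iterate_succ_apply']
    exact inter_subset_right

/-- Limit of longer and longer solution windows is a full solution. -/
lemma limit_sol (hF : IsUSC F) (hFc : ∀ x, IsCompact (F x)) (hN : IsCompact N) {x : X}
    (g : ℕ → ℤ → X) (m : ℕ → ℕ) (hm : Tendsto m atTop atTop)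
    (hg : ∀ k j, g k j ∈ N)
    (hstep : ∀ k, ∀ j : ℤ, -(m k : ℤ) ≤ j → j < (m k : ℤ) → g k (j + 1) ∈ F (g k j))
    (h0 : Tendsto (fun k => g k 0) atTop (𝓝 x)) :
    x ∈ InvPart F N := by
  obtain ⟨f, hfN, φ, hφ, hconv⟩ := seq_extract hN g hg
  have hf0 : f 0 = x := tendsto_nhds_unique (hconv 0) (h0.comp hφ.tendsto_atTop)
  refine ⟨f, hfN, hf0, ?_⟩
  intro j
  have hev : ∀ᶠ k in atTop, g (φ k) (j + 1) ∈ F (g (φ k) j) := by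
    have : ∀ᶠ k in atTop, (j.natAbs + 1 : ℕ) ≤ m (φ k) :=
      (hm.comp hφ.tendsto_atTop).eventually_ge_atTop _
    refine this.mono fun k hk => ?_
    refine hstep (φ k) j ?_ ?_
    · have h1 : j.natAbs ≤ m (φ k) := by omega
      have h2 : -(j.natAbs : ℤ) ≤ j := by
        rcases Int.natAbs_eq j with h | h <;> omega
      have h3 : ((j.natAbs : ℕ) : ℤ) ≤ ((m (φ k) : ℕ) : ℤ) := by exact_mod_cast h1
      omega
    · have h2 : j ≤ (j.natAbs : ℤ) := by
        rcases Int.natAbs_eq j with h | h <;> omega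
      have h3 : ((j.natAbs : ℕ) : ℤ) < ((m (φ k) : ℕ) : ℤ) := by exact_mod_cast (by omega : j.natAbs < m (φ k))
      omega
  exact step_limit hF hFc (hconv j) (hconv (j + 1)) hev

lemma invPart_subset (F : X → Set X) (N : Set X) : InvPart F N ⊆ N := by
  rintro x ⟨σ, hσN, hσ0, -⟩
  rw [← hσ0]; exact hσN 0

lemma invPart_isClosed (hF : IsUSC F) (hFc : ∀ x, IsCompact (F x)) (hN : IsCompact N) :
    IsClosed (InvPart F N) := by
  refine IsSeqClosed.isClosed ?_
  intro u x hu hux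
  choose σ hσN hσ0 hσS using hu
  refine limit_sol hF hFc hN σ (fun k => k) tendsto_id hσN
    (fun k j _ _ => hσS k j) ?_
  simpa only [hσ0] using hux

lemma invPart_isCompact (hF : IsUSC F) (hFc : ∀ x, IsCompact (F x)) (hN : IsCompact N) :
    IsCompact (InvPart F N) :=
  hN.of_isClosed_subset (invPart_isClosed hF hFc hN) (invPart_subset F N)

end Aux2

section Aux3

variable {X : Type*} [MetricSpace X] {F : X → Set X} {N : Set X}

lemma exists_subseq_ge (n : ℕ → ℕ) (h : ¬ BddAbove (Set.range n)) :
    ∃ φ : ℕ → ℕ, StrictMono φ ∧ ∀ m, m ≤ n (φ m) := by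
  refine extraction_forall_of_frequently (P := fun m k => m ≤ n k) fun m => ?_
  rw [Nat.frequently_atTop_iff_infinite]
  by_contra hfin
  rw [Set.not_infinite] at hfin
  apply h
  obtain ⟨b, hb⟩ := (hfin.image n).bddAbove
  refine ⟨max b m, ?_⟩
  rintro v ⟨k, rfl⟩
  by_cases hk : m ≤ n k
  · exact le_trans (hb (Set.mem_image_of_mem n hk)) (le_max_left _ _)
  · exact le_trans (not_le.mp hk).le (le_max_right _ _)

lemma exists_subseq_const (n : ℕ → ℕ) (M : ℕ) (h : ∀ k, n k ≤ M) :
    ∃ n₀, ∃ φ : ℕ → ℕ, StrictMono φ ∧ ∀ l, n (φ l) = n₀ := by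
  obtain ⟨y, hy⟩ := Finite.exists_infinite_fiber
    (fun k => (⟨n k, Nat.lt_succ_of_le (h k)⟩ : Fin (M + 1)))
  rw [Set.infinite_coe_iff] at hy
  have hfreq : ∃ᶠ k in atTop, n k = y.val := by
    rw [Nat.frequently_atTop_iff_infinite]
    refine hy.mono ?_
    intro k hk
    simp only [Set.mem_preimage, Set.mem_singleton_iff] at hk
    exact congrArg Fin.val hk
  obtain ⟨φ, hφ, hφ'⟩ := extraction_of_frequently_atTop hfreq
  exact ⟨y.val, φ, hφ, hφ'⟩

/-- Key isolation lemma: a sufficiently small compact neighbourhood of the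
invariant part has a forward orbit that meets `InvPlus` only inside `U`. -/
lemma claimC (hF : IsUSC F) (hFc : ∀ x, IsCompact (F x)) (hN : IsCompact N)
    (hS : (InvPart F N).Nonempty)
    {U Q : Set X} (hUo : IsOpen U) (hSU : InvPart F N ⊆ U) (hUN : U ⊆ N)
    (hQU : Q ⊆ U) :
    ∃ ε : ℝ, 0 < ε ∧ ∀ x,
      x ∈ (⋃ m, (GG F N)^[m] (Q ∩ {z | Metric.infDist z (InvPart F N) ≤ ε})) →
      x ∈ InvPlus F N → x ∈ U := by
  by_contra hcon
  push_neg at hcon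
  have hc' : ∀ k : ℕ, ∃ x,
      (x ∈ ⋃ m, (GG F N)^[m] (Q ∩ {z | Metric.infDist z (InvPart F N) ≤ 1 / (k + 1)})) ∧
      x ∈ InvPlus F N ∧ x ∉ U := by
    intro k
    obtain ⟨x, h1, h2, h3⟩ := hcon (1 / (k + 1)) (by positivity)
    exact ⟨x, h1, h2, h3⟩
  choose y hyΓ hyP hyU using hc'
  have hAN : ∀ k : ℕ, Q ∩ {z | Metric.infDist z (InvPart F N) ≤ 1 / (k + 1 : ℝ)} ⊆ N :=
    fun k => (inter_subset_left).trans (hQU.trans hUN)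
  have hyN : ∀ k, y k ∈ N := by
    intro k
    obtain ⟨m, hm⟩ := mem_iUnion.mp (hyΓ k)
    exact iterate_GG_subset_N (hAN k) m hm
  have hn : ∀ k : ℕ, ∃ m, y k ∈ (GG F N)^[m]
      (Q ∩ {z | Metric.infDist z (InvPart F N) ≤ 1 / ((k : ℝ) + 1)}) :=
    fun k => mem_iUnion.mp (hyΓ k)
  choose n hn using hn
  have hchain := fun k => (mem_iterate_GG (n k) (y k)).mp (hn k)
  choose c hc0 hcn hcN hcS using hchain
  choose σ hσ0 hσN hσS using hyP
  set g : ℕ → ℤ → X := fun k j => if j < 0 then c k ((j + n k).toNat) else σ k j.toNat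
    with hgdef
  have hg0 : ∀ k, g k 0 = y k := by
    intro k; simp only [hgdef]; norm_num; exact hσ0 k
  have hgN : ∀ k j, g k j ∈ N := by
    intro k j
    by_cases hj : j < 0
    · simp only [hgdef, if_pos hj]
      rcases Nat.eq_zero_or_pos ((j + n k).toNat) with h0 | hpos
      · rw [h0]; exact (hAN k) (hc0 k)
      · exact hcN k ((j + (n k : ℤ)).toNat) hpos (by omega)
    · simp only [hgdef, if_neg hj]; exact hσN k _
  have hgS : ∀ k, ∀ j : ℤ, -(n k : ℤ) ≤ j → g k (j + 1) ∈ F (g k j) := by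
    intro k j hj
    rcases lt_trichotomy (j + 1) 0 with h1 | h1 | h1
    · have hj0 : j < 0 := by omega
      simp only [hgdef, if_pos hj0, if_pos h1]
      have he : (j + 1 + n k).toNat = (j + n k).toNat + 1 := by omega
      rw [he]
      exact hcS k _ (by omega)
    · have hj0 : j < 0 := by omega
      have hjn : j = -1 := by omega
      subst hjn
      simp only [hgdef]
      norm_num
      have hn1 : ((-1 : ℤ) + n k).toNat = n k - 1 := by omega
      rw [hn1, hσ0, ← hcn]
      have h5 := hcS k (n k - 1) (by omega)
      rwa [show n k - 1 + 1 = n k from by omega] at h5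
    · have hj0 : ¬ j < 0 := by omega
      have hj1 : ¬ j + 1 < 0 := by omega
      simp only [hgdef, if_neg hj0, if_neg hj1]
      have he : (j + 1).toNat = j.toNat + 1 := by omega
      rw [he]
      exact hσS k _
  by_cases hbd : BddAbove (Set.range n)
  · -- bounded case
    obtain ⟨M, hM⟩ := hbd
    have hM' : ∀ k, n k ≤ M := fun k => hM (Set.mem_range_self k)
    obtain ⟨n₀, φ₁, hφ₁, hφ₁'⟩ := exists_subseq_const n M hM'
    obtain ⟨z, hzN, φ₂, hφ₂, hz⟩ := hN.tendsto_subseq (x := fun k => y (φ₁ k))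
      (fun k => hyN (φ₁ k))
    obtain ⟨f, hfN, ψ, hψ, hconv⟩ := seq_extract hN (fun l => g (φ₁ (φ₂ l)))
      (fun l j => hgN _ j)
    set K : ℕ → ℕ := fun l => φ₁ (φ₂ (ψ l)) with hKdef
    have hKmono : StrictMono K := hφ₁.comp (hφ₂.comp hψ)
    have hKge : ∀ l, l ≤ K l := fun l => hKmono.le_apply
    have hf0 : f 0 = z := by
      refine tendsto_nhds_unique (hconv 0) ?_
      have : Tendsto (fun l => y (φ₁ (φ₂ (ψ l)))) atTop (𝓝 z) := hz.comp hψ.tendsto_atTop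
      simpa only [hg0] using this
    -- steps of f for j ≥ -n₀
    have hfS : ∀ j : ℤ, -(n₀ : ℤ) ≤ j → f (j + 1) ∈ F (f j) := by
      intro j hj
      refine step_limit hF hFc (hconv j) (hconv (j + 1)) ?_
      refine Filter.Eventually.of_forall fun l => ?_
      refine hgS (K l) j ?_
      rw [show n (K l) = n₀ from hφ₁' (φ₂ (ψ l))]
      exact hj
    -- f (-n₀) ∈ InvPart
    have hfin : f (-(n₀ : ℤ)) ∈ InvPart F N := by
      have hA : ∀ l, Metric.infDist (g (K l) (-(n₀ : ℤ))) (InvPart F N) ≤ 1 / (l + 1 : ℝ) := by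
        intro l
        have hnl : n (K l) = n₀ := hφ₁' (φ₂ (ψ l))
        have hval : g (K l) (-(n₀ : ℤ)) = c (K l) 0 := by
          rcases Nat.eq_zero_or_pos n₀ with h0 | hpos
          · simp only [hgdef, h0]
            norm_num
            rw [hσ0, ← hcn (K l), hnl, h0]
          · have : (-(n₀ : ℤ)) < 0 := by omega
            simp only [hgdef, if_pos this, hnl]
            norm_num
        rw [hval]
        have := (hc0 (K l)).2
        simp only [mem_setOf_eq] at this
        refine le_trans this ?_
        have h1 : (l : ℝ) + 1 ≤ (K l : ℝ) + 1 := by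
          have h2 : (l : ℝ) ≤ (K l : ℝ) := (Nat.cast_le (α := ℝ)).mpr (hKge l)
          linarith
        rw [div_le_div_iff₀ (by positivity) (by positivity)]
        nlinarith
      have htend : Tendsto (fun l => Metric.infDist (g (K l) (-(n₀ : ℤ))) (InvPart F N))
          atTop (𝓝 (Metric.infDist (f (-(n₀ : ℤ))) (InvPart F N))) :=
        ((Metric.continuous_infDist_pt (InvPart F N)).tendsto _).comp (hconv _)
      have hzero : Tendsto (fun l => Metric.infDist (g (K l) (-(n₀ : ℤ))) (InvPart F N))
          atTop (𝓝 0) := by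
        refine squeeze_zero (fun l => Metric.infDist_nonneg) hA ?_
        exact tendsto_one_div_add_atTop_nhds_zero_nat
      have heq : Metric.infDist (f (-(n₀ : ℤ))) (InvPart F N) = 0 :=
        tendsto_nhds_unique htend hzero
      exact ((invPart_isClosed hF hFc hN).mem_iff_infDist_zero hS).mpr heq
    obtain ⟨τ, hτN, hτ0, hτS⟩ := hfin
    have hzS : z ∈ InvPart F N := by
      refine ⟨fun j => if -(n₀ : ℤ) ≤ j then f j else τ (j + n₀), ?_, ?_, ?_⟩
      · intro j
        by_cases hj : -(n₀ : ℤ) ≤ j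
        · simp only [if_pos hj]; exact hfN j
        · simp only [if_neg hj]; exact hτN _
      · simp only [if_pos (by omega : -(n₀ : ℤ) ≤ 0)]; exact hf0
      · intro j
        rcases lt_trichotomy (j + 1) (-(n₀ : ℤ)) with h1 | h1 | h1
        · simp only [if_neg (by omega : ¬ -(n₀ : ℤ) ≤ j),
            if_neg (by omega : ¬ -(n₀ : ℤ) ≤ j + 1)]
          have : j + 1 + n₀ = (j + n₀) + 1 := by ring
          rw [this]
          exact hτS _
        · simp only [if_neg (by omega : ¬ -(n₀ : ℤ) ≤ j),
            if_pos (by omega : -(n₀ : ℤ) ≤ j + 1)]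
          have h2 : j + (n₀ : ℤ) = -1 := by omega
          rw [h1, ← hτ0, h2]
          have h3 := hτS (-1)
          norm_num at h3
          exact h3
        · simp only [if_pos (by omega : -(n₀ : ℤ) ≤ j),
            if_pos (by omega : -(n₀ : ℤ) ≤ j + 1)]
          exact hfS j (by omega)
    have : z ∈ Uᶜ := by
      refine (hUo.isClosed_compl).mem_of_tendsto (hz.comp hψ.tendsto_atTop) ?_
      exact Filter.Eventually.of_forall fun l => hyU _
    exact this (hSU hzS)
  · -- unbounded case
    obtain ⟨φ₁, hφ₁, hφ₁'⟩ := exists_subseq_ge n hbd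
    obtain ⟨z, hzN, φ₂, hφ₂, hz⟩ := hN.tendsto_subseq (x := fun k => y (φ₁ k))
      (fun k => hyN (φ₁ k))
    have hzS : z ∈ InvPart F N := by
      refine limit_sol hF hFc hN (fun l => g (φ₁ (φ₂ l))) (fun l => n (φ₁ (φ₂ l))) ?_
        (fun l j => hgN _ j) ?_ ?_
      · refine tendsto_atTop_mono (fun l => ?_) tendsto_id
        exact le_trans hφ₂.le_apply (hφ₁' (φ₂ l))
      · intro l j hj _
        exact hgS _ j hj
      · simp only [hg0]; exact hz
    have : z ∈ Uᶜ := by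
      refine (hUo.isClosed_compl).mem_of_tendsto hz ?_
      exact Filter.Eventually.of_forall fun l => hyU _
    exact this (hSU hzS)

end Aux3

section Aux4

variable {X : Type*} [MetricSpace X] {F : X → Set X} {N : Set X}

/-- The forward orbit of a small compact neighbourhood of the invariant part is closed. -/
lemma gamma_closed (hF : IsUSC F) (hFc : ∀ x, IsCompact (F x)) (hN : IsCompact N)
    {A : Set X} (hA : IsCompact A) (hAN : A ⊆ N)
    (hSA : InvPart F N ⊆ interior A) :
    IsClosed (⋃ m, (GG F N)^[m] A) := by
  refine IsSeqClosed.isClosed ?_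
  intro u x hu hux
  have hn : ∀ k, ∃ m, u k ∈ (GG F N)^[m] A := fun k => mem_iUnion.mp (hu k)
  choose n hn using hn
  by_cases hbd : BddAbove (Set.range n)
  · obtain ⟨M, hM⟩ := hbd
    obtain ⟨n₀, φ, hφ, hφ'⟩ := exists_subseq_const n M (fun k => hM (Set.mem_range_self k))
    have hcl : IsClosed ((GG F N)^[n₀] A) := (iterate_GG_compact hF hFc hN hA n₀).isClosed
    refine mem_iUnion.mpr ⟨n₀, ?_⟩
    refine hcl.mem_of_tendsto (hux.comp hφ.tendsto_atTop) ?_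
    refine Filter.Eventually.of_forall fun l => ?_
    have := hn (φ l)
    rwa [hφ' l] at this
  · obtain ⟨φ₁, hφ₁, hφ₁'⟩ := exists_subseq_ge n hbd
    have hchain := fun k => (mem_iterate_GG (n k) (u k)).mp (hn k)
    choose c hc0 hcn hcN hcS using hchain
    set g : ℕ → ℤ → X := fun k j => c k (min ((j + n k).toNat) (n k)) with hgdef
    have hg0 : ∀ k, g k 0 = u k := by
      intro k
      simp only [hgdef]
      rw [show min (((0 : ℤ) + n k).toNat) (n k) = n k by omega]
      exact hcn k
    have hgN : ∀ k j, g k j ∈ N := by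
      intro k j
      simp only [hgdef]
      rcases Nat.eq_zero_or_pos (min ((j + n k).toNat) (n k)) with h0 | hpos
      · rw [h0]; exact hAN (hc0 k)
      · exact hcN k _ hpos (min_le_right _ _)
    have hgS : ∀ k, ∀ j : ℤ, -(n k : ℤ) ≤ j → j < 0 → g k (j + 1) ∈ F (g k j) := by
      intro k j hj hj'
      simp only [hgdef]
      have e1 : min ((j + n k).toNat) (n k) = (j + n k).toNat := by omega
      have e2 : min ((j + 1 + n k).toNat) (n k) = (j + n k).toNat + 1 := by omega
      rw [e1, e2]
      exact hcS k ((j + (n k : ℤ)).toNat) (by omega)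
    obtain ⟨f, hfN, ψ, hψ, hconv⟩ := seq_extract hN (fun l => g (φ₁ l)) (fun l j => hgN _ j)
    set K : ℕ → ℕ := fun l => φ₁ (ψ l) with hKdef
    have hKge : ∀ l, l ≤ n (K l) := fun l => le_trans hψ.le_apply (hφ₁' (ψ l))
    have hf0 : f 0 = x := by
      refine tendsto_nhds_unique (hconv 0) ?_
      have h1 : Tendsto (fun l => u (K l)) atTop (𝓝 x) :=
        hux.comp ((hφ₁.comp hψ).tendsto_atTop)
      simpa only [hg0] using h1
    have hfS : ∀ j : ℤ, j < 0 → f (j + 1) ∈ F (f j) := by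
      intro j hj
      refine step_limit hF hFc (hconv j) (hconv (j + 1)) ?_
      have hev : ∀ᶠ l in atTop, (j.natAbs ≤ n (K l)) := by
        refine (Filter.eventually_ge_atTop j.natAbs).mono fun l hl => le_trans hl (hKge l)
      refine hev.mono fun l hl => ?_
      refine hgS (K l) j ?_ hj
      have : j = -(j.natAbs : ℤ) := by
        rcases Int.natAbs_eq j with h | h <;> omega
      omega
    -- limit set argument
    set T : ℕ → Set X := fun J => closure ((fun j : ℕ => f (-(j : ℤ))) '' Set.Ici J) with hTdef
    have hTN : ∀ J, T J ⊆ N := by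
      intro J
      refine closure_minimal ?_ hN.isClosed
      rintro p ⟨j, -, rfl⟩
      exact hfN _
    have hTne : ∀ J, (T J).Nonempty :=
      fun J => ⟨f (-(J : ℤ)), subset_closure ⟨J, Set.mem_Ici.mpr le_rfl, rfl⟩⟩
    have hkey : ∃ J, T J ⊆ interior A := by
      by_contra hcontra
      push_neg at hcontra
      have hne : ∀ J, (T J ∩ (interior A)ᶜ).Nonempty := by
        intro J
        obtain ⟨p, hp, hp'⟩ := not_subset.mp (hcontra J)
        exact ⟨p, hp, hp'⟩
      have hz : (⋂ J, T J ∩ (interior A)ᶜ).Nonempty := by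
        refine IsCompact.nonempty_iInter_of_directed_nonempty_isCompact_isClosed
          (fun J => T J ∩ (interior A)ᶜ) ?_ hne
          (fun J => (hN.of_isClosed_subset (isClosed_closure) (hTN J)).inter_right
            isOpen_interior.isClosed_compl)
          (fun J => (isClosed_closure).inter isOpen_interior.isClosed_compl)
        intro a b
        refine ⟨max a b, ?_, ?_⟩
        · exact inter_subset_inter
            (closure_mono (Set.image_mono (Set.Ici_subset_Ici.mpr (le_max_left a b)))) subset_rfl
        · exact inter_subset_inter
            (closure_mono (Set.image_mono (Set.Ici_subset_Ici.mpr (le_max_right a b)))) subset_rfl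
      obtain ⟨z, hz⟩ := hz
      have hz1 : ∀ J, z ∈ T J := fun J => (mem_iInter.mp hz J).1
      have hz2 : z ∉ interior A := (mem_iInter.mp hz 0).2
      -- z admits a full solution
      have hzS : z ∈ InvPart F N := by
        have hfreq : ∀ l : ℕ, ∃ᶠ j : ℕ in atTop, dist z (f (-(j : ℤ))) < 1 / (l + 1 : ℝ) := by
          intro l
          rw [Filter.frequently_atTop]
          intro J
          have := hz1 J
          rw [hTdef] at this
          obtain ⟨p, ⟨j, hj, rfl⟩, hd⟩ :=
            Metric.mem_closure_iff.mp this (1 / (l + 1 : ℝ)) (by positivity)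
          exact ⟨j, hj, hd⟩
        obtain ⟨ψ₂, hψ₂, hψ₂'⟩ := extraction_forall_of_frequently
          (P := fun l j => dist z (f (-(j : ℤ))) < 1 / (l + 1 : ℝ)) hfreq
        refine limit_sol hF hFc hN
          (fun l j => f (min (j - (ψ₂ l : ℤ)) 0)) ψ₂ hψ₂.tendsto_atTop
          (fun l j => hfN _) ?_ ?_
        · intro l j hjl hju
          have e1 : min (j - (ψ₂ l : ℤ)) 0 = j - ψ₂ l := by omega
          have e2 : min (j + 1 - (ψ₂ l : ℤ)) 0 = (j - ψ₂ l) + 1 := by omega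
          simp only [e1, e2]
          exact hfS (j - (ψ₂ l : ℤ)) (by omega)
        · have heq : ∀ l : ℕ, f (min ((0 : ℤ) - (ψ₂ l : ℤ)) 0) = f (-(ψ₂ l : ℤ)) := by
            intro l
            rw [show min ((0 : ℤ) - (ψ₂ l : ℤ)) 0 = -(ψ₂ l : ℤ) by omega]
          simp only [heq]
          rw [tendsto_iff_dist_tendsto_zero]
          refine squeeze_zero (fun l => dist_nonneg) (fun l => ?_) 
            tendsto_one_div_add_atTop_nhds_zero_nat
          rw [dist_comm]
          exact (hψ₂' l).le
      exact hz2 (hSA hzS)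
    obtain ⟨J, hJ⟩ := hkey
    have hfJ : f (-(J : ℤ)) ∈ A :=
      interior_subset (hJ (subset_closure ⟨J, Set.mem_Ici.mpr le_rfl, rfl⟩))
    refine mem_iUnion.mpr ⟨J, ?_⟩
    refine (mem_iterate_GG J x).mpr ⟨fun i => f ((i : ℤ) - J), by simpa using hfJ, ?_, ?_, ?_⟩
    · show f ((J : ℤ) - (J : ℤ)) = x
      rw [show (J : ℤ) - (J : ℤ) = 0 by omega]
      exact hf0
    · intro i _ _; exact hfN _
    · intro i hi
      show f (((i + 1 : ℕ) : ℤ) - (J : ℤ)) ∈ F (f ((i : ℤ) - (J : ℤ)))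
      have e : ((i + 1 : ℕ) : ℤ) - (J : ℤ) = ((i : ℤ) - J) + 1 := by push_cast; ring
      rw [e]
      exact hfS ((i : ℤ) - (J : ℤ)) (by omega)

lemma claimE (hF : IsUSC F) (hFc : ∀ x, IsCompact (F x)) (hN : IsCompact N)
    {E : Set X} (hEN : E ⊆ N) (hEc : IsClosed E)
    (hnoinf : ∀ x ∈ E, x ∉ InvPlus F N) :
    ∃ M, ∀ m, ((GG F N)^[m] E).Nonempty → m ≤ M := by
  by_contra h
  push_neg at h
  have hch : ∀ k : ℕ, ∃ c : ℕ → X, c 0 ∈ E ∧ (∀ i, 1 ≤ i → i ≤ k → c i ∈ N) ∧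
      ∀ i < k, c (i + 1) ∈ F (c i) := by
    intro k
    obtain ⟨m, hmne, hmk⟩ := h k
    obtain ⟨x, hx⟩ := hmne
    obtain ⟨c, hc0, -, hcN, hcS⟩ := (mem_iterate_GG m x).mp hx
    exact ⟨c, hc0, fun i h1 h2 => hcN i h1 (by omega), fun i hi => hcS i (by omega)⟩
  choose c hc0 hcN hcS using hch
  set g : ℕ → ℤ → X := fun k j => c k (min j.toNat k) with hgdef
  have hgN : ∀ k j, g k j ∈ N := by
    intro k j
    simp only [hgdef]
    rcases Nat.eq_zero_or_pos (min j.toNat k) with h0 | hpos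
    · rw [h0]; exact hEN (hc0 k)
    · exact hcN k _ hpos (min_le_right _ _)
  obtain ⟨f, hfN, ψ, hψ, hconv⟩ := seq_extract hN g hgN
  have hf0 : f 0 ∈ E := by
    refine hEc.mem_of_tendsto (hconv 0) ?_
    refine Filter.Eventually.of_forall fun l => ?_
    simp only [hgdef]
    rw [show min ((0 : ℤ)).toNat (ψ l) = 0 by omega]
    exact hc0 _
  have hfS : ∀ i : ℕ, f ((i : ℤ) + 1) ∈ F (f (i : ℤ)) := by
    intro i
    refine step_limit hF hFc (hconv i) (hconv ((i : ℤ) + 1)) ?_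
    have hev : ∀ᶠ l in atTop, i + 1 ≤ ψ l :=
      (Filter.eventually_ge_atTop (i + 1)).mono fun l hl => le_trans hl hψ.le_apply
    refine hev.mono fun l hl => ?_
    simp only [hgdef]
    have e1 : min ((i : ℤ)).toNat (ψ l) = i := by omega
    have e2 : min ((i : ℤ) + 1).toNat (ψ l) = i + 1 := by omega
    rw [e1, e2]
    exact hcS _ i (by omega)
  refine hnoinf (f 0) hf0 ⟨fun i => f (i : ℤ), rfl, fun i => hfN _, fun i => ?_⟩
  show f (((i + 1 : ℕ) : ℤ)) ∈ F (f (i : ℤ))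
  have e : ((i + 1 : ℕ) : ℤ) = (i : ℤ) + 1 := by push_cast; ring
  rw [e]
  exact hfS i

end Aux4


/-- Theorem (existence of weak index pairs): if `N` is an isolating neighbourhood
for an usc multivalued map `F` with compact values, then every neighbourhood `W`
of `Inv N` contains the difference `P₁ \ P₂` of some weak index pair `P` in `N`. -/
theorem exists_weakIndexPair {X : Type*} [MetricSpace X] [LocallyCompactSpace X]
    (F : X → Set X) (hF : IsUSC F) (hFc : ∀ x, IsCompact (F x))
    (N : Set X) (hN : IsCompact N) (hiso : InvPart F N ⊆ interior N)
    (W : Set X) (hW : InvPart F N ⊆ interior W) :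
    ∃ P₁ P₂ : Set X, IsWeakIndexPair F N P₁ P₂ ∧ P₁ \ P₂ ⊆ W := by
  by_cases hS : (InvPart F N).Nonempty
  · -- main case
    have hSN : InvPart F N ⊆ N := invPart_subset F N
    have hScomp : IsCompact (InvPart F N) := invPart_isCompact hF hFc hN
    set U := interior N ∩ interior W with hUdef
    have hUo : IsOpen U := isOpen_interior.inter isOpen_interior
    have hSU : InvPart F N ⊆ U := subset_inter hiso hW
    have hUN : U ⊆ N := inter_subset_left.trans interior_subset
    obtain ⟨Q, hQcomp, hSQ, hQU⟩ := exists_compact_between hScomp hUo hSU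
    obtain ⟨ε, hε, hclaimC⟩ := claimC hF hFc hN hS hUo hSU hUN hQU
    set A := Q ∩ {z | Metric.infDist z (InvPart F N) ≤ ε} with hAdef
    have hAcomp : IsCompact A :=
      hQcomp.inter_right (isClosed_le (Metric.continuous_infDist_pt _) continuous_const)
    have hAN : A ⊆ N := inter_subset_left.trans (hQU.trans hUN)
    have hSA : InvPart F N ⊆ interior A := by
      intro x hx
      have hopen : IsOpen (interior Q ∩ {z | Metric.infDist z (InvPart F N) < ε}) :=
        isOpen_interior.inter (isOpen_lt (Metric.continuous_infDist_pt _) continuous_const)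
      have hsub : interior Q ∩ {z | Metric.infDist z (InvPart F N) < ε} ⊆ A :=
        inter_subset_inter interior_subset (fun z hz => by
          have hz' : Metric.infDist z (InvPart F N) < ε := hz
          exact le_of_lt hz')
      refine interior_maximal hsub hopen ⟨hSQ hx, ?_⟩
      simp only [mem_setOf_eq, Metric.infDist_zero_of_mem hx]
      exact hε
    set Γ := ⋃ m, (GG F N)^[m] A with hΓdef
    have hΓclosed : IsClosed Γ := gamma_closed hF hFc hN hAcomp hAN hSA
    have hΓN : Γ ⊆ N := iUnion_subset fun m => iterate_GG_subset_N hAN m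
    have hΓcomp : IsCompact Γ := hN.of_isClosed_subset hΓclosed hΓN
    have hAΓ : A ⊆ Γ := fun z hz => mem_iUnion.mpr ⟨0, by simpa using hz⟩
    have hΓinv : MVImage F Γ ∩ N ⊆ Γ := by
      rintro y ⟨hyM, hyN⟩
      obtain ⟨x, hxΓ, hyF⟩ := mem_MVImage.mp hyM
      obtain ⟨m, hm⟩ := mem_iUnion.mp hxΓ
      refine mem_iUnion.mpr ⟨m + 1, ?_⟩
      rw [Function.iterate_succ_apply']
      exact mem_GG.mpr ⟨⟨x, hm, hyF⟩, hyN⟩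
    set E := Γ \ U with hEdef
    have hEcomp : IsCompact E := hΓcomp.diff hUo
    have hEN : E ⊆ N := diff_subset.trans hΓN
    have hEΓ : E ⊆ Γ := diff_subset
    have hEnoplus : ∀ x ∈ E, x ∉ InvPlus F N := by
      intro x hx hplus
      exact hx.2 (hclaimC x (hEΓ hx) hplus)
    obtain ⟨M, hM⟩ := claimE hF hFc hN hEN hEcomp.isClosed hEnoplus
    set P₂ := ⋃ m, (GG F N)^[m] E with hP₂def
    have hP₂eq : P₂ = ⋃ m ∈ Set.Iic M, (GG F N)^[m] E := by
      ext x
      simp only [hP₂def, mem_iUnion, exists_prop]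
      constructor
      · rintro ⟨m, hm⟩; exact ⟨m, hM m ⟨x, hm⟩, hm⟩
      · rintro ⟨m, -, hm⟩; exact ⟨m, hm⟩
    have hP₂comp : IsCompact P₂ := by
      rw [hP₂eq]
      exact (Set.finite_Iic M).isCompact_biUnion fun m _ => iterate_GG_compact hF hFc hN hEcomp m
    have hEP₂ : E ⊆ P₂ := fun z hz => mem_iUnion.mpr ⟨0, by simpa using hz⟩
    have hP₂Γ : P₂ ⊆ Γ := by
      refine iUnion_subset fun m => ?_
      induction m with
      | zero => simpa using hEΓ
      | succ m ih =>
        rw [Function.iterate_succ_apply']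
        rintro y hy
        obtain ⟨⟨x, hx, hyF⟩, hyN⟩ := mem_GG.mp hy
        exact hΓinv ⟨mem_MVImage.mpr ⟨x, ih hx, hyF⟩, hyN⟩
    have hP₂inv : MVImage F P₂ ∩ N ⊆ P₂ := by
      rintro y ⟨hyM, hyN⟩
      obtain ⟨x, hxP, hyF⟩ := mem_MVImage.mp hyM
      obtain ⟨m, hm⟩ := mem_iUnion.mp hxP
      refine mem_iUnion.mpr ⟨m + 1, ?_⟩
      rw [Function.iterate_succ_apply']
      exact mem_GG.mpr ⟨⟨x, hm, hyF⟩, hyN⟩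
    have hSP₂ : ∀ x ∈ InvPart F N, x ∉ P₂ := by
      intro x hxS hxP
      obtain ⟨m, hm⟩ := mem_iUnion.mp hxP
      obtain ⟨c, hc0, hcn, hcN, hcS⟩ := (mem_iterate_GG m x).mp hm
      obtain ⟨σ, hσN, hσ0, hσS⟩ := hxS
      have hplus : c 0 ∈ InvPlus F N := by
        refine ⟨fun i => if i < m then c i else σ ((i : ℤ) - m), ?_, ?_, ?_⟩
        · by_cases h0 : 0 < m
          · simp only [if_pos h0]
          · simp only [if_neg h0]
            have hm0 : m = 0 := by omega
            rw [hm0]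
            norm_num
            rw [hσ0, ← hcn, hm0]
        · intro i
          by_cases h : i < m
          · simp only [if_pos h]
            rcases Nat.eq_zero_or_pos i with h0 | hpos
            · rw [h0]; exact hEN (hc0)
            · exact hcN i hpos (by omega)
          · simp only [if_neg h]; exact hσN _
        · intro i
          rcases lt_trichotomy (i + 1) m with h1 | h1 | h1
          · simp only [if_pos (by omega : i < m), if_pos h1]
            exact hcS i (by omega)
          · simp only [if_pos (by omega : i < m), if_neg (by omega : ¬ i + 1 < m)]
            have e : ((i + 1 : ℕ) : ℤ) - m = 0 := by omega
            rw [e, hσ0, ← hcn]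
            have e2 : i + 1 = m := h1
            rw [show m = i + 1 from e2.symm]
            exact hcS i (by omega)
          · simp only [if_neg (by omega : ¬ i < m), if_neg (by omega : ¬ i + 1 < m)]
            have e : ((i + 1 : ℕ) : ℤ) - m = ((i : ℤ) - m) + 1 := by push_cast; ring
            rw [e]
            exact hσS ((i : ℤ) - m)
      exact hEnoplus (c 0) hc0 hplus
    have hdiffU : Γ \ P₂ ⊆ U := by
      rintro z ⟨hzΓ, hzP⟩
      by_contra hzU
      exact hzP (hEP₂ ⟨hzΓ, hzU⟩)
    refine ⟨Γ, P₂, ⟨hΓcomp, hP₂comp, hP₂Γ, hΓN, hΓinv, hP₂inv, ?_, ?_, ?_⟩, ?_⟩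
    · -- FBoundary
      intro y hy
      have hy' : y ∈ closure Γ ∩ closure (MVImage F Γ \ Γ) := hy
      obtain ⟨hy1, hy2⟩ := hy'
      rw [hΓclosed.closure_eq] at hy1
      have h1 : MVImage F Γ \ Γ ⊆ (interior N)ᶜ := by
        rintro w ⟨hwM, hwΓ⟩
        intro hwint
        exact hwΓ (hΓinv ⟨hwM, interior_subset hwint⟩)
      have h2 : y ∈ (interior N)ᶜ :=
        closure_minimal h1 isOpen_interior.isClosed_compl hy2
      refine hEP₂ ⟨hy1, ?_⟩
      intro hyU
      exact h2 (inter_subset_left hyU)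
    · -- inv_subset
      intro x hx
      have hopen : IsOpen (interior A ∩ P₂ᶜ) :=
        isOpen_interior.inter hP₂comp.isClosed.isOpen_compl
      have hsub : interior A ∩ P₂ᶜ ⊆ Γ \ P₂ :=
        fun z hz => ⟨hAΓ (interior_subset hz.1), hz.2⟩
      exact interior_maximal hsub hopen ⟨hSA hx, hSP₂ x hx⟩
    · -- diff_subset
      exact fun z hz => (hdiffU hz).1
    · -- ⊆ W
      exact fun z hz => interior_subset (hdiffU hz).2
  · -- empty invariant part
    have hempty : InvPart F N = ∅ := Set.not_nonempty_iff_eq_empty.mp hS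
    refine ⟨∅, ∅, ⟨isCompact_empty, isCompact_empty, subset_rfl, empty_subset N, ?_, ?_, ?_, ?_, ?_⟩, ?_⟩
    · simp [MVImage]
    · simp [MVImage]
    · simp [FBoundary]
    · rw [hempty]; exact empty_subset _
    · simp
    · simp
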